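/- Let c ∈ ℝ. For all natural numbers q ≤ m and α ≤ 2m+1, applying the operator c^{2q} ∂_x^α Δ^q to the tensor-product Taylor polynomial p and evaluating at the center gives c^{2q} ∂_x^α Δ^q p(x_i, y_j) = c^{2q} Σ_{j} C(q,j) · (2(q−j)+α)!/Δx^{2(q−j)+α} · (2j)!/Δy^{2j} · c_{2(q−j)+α, 2j}, where the sum runs over 0 ≤ j ≤ q with 2(q−j)+α ≤ 2m+1. -/

import Mathlib

open Finset

/-- Partial derivative in the first (x) variable. -/
noncomputable def pd1 (f : ℝ × ℝ → ℝ) : ℝ × ℝ → ℝ :=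
  fun p => deriv (fun x => f (x, p.2)) p.1

/-- Partial derivative in the second (y) variable. -/
noncomputable def pd2 (f : ℝ × ℝ → ℝ) : ℝ × ℝ → ℝ :=
  fun p => deriv (fun y => f (p.1, y)) p.2

/-- The Laplacian Δ = ∂_x² + ∂_y². -/
noncomputable def lapl2 (f : ℝ × ℝ → ℝ) : ℝ × ℝ → ℝ :=
  fun p => pd1 (pd1 f) p + pd2 (pd2 f) p

/-- The tensor-product Taylor polynomial
p(x,y) = Σ_{l₁=0}^{2m+1} Σ_{l₂=0}^{2m+1} c_{l₁,l₂} ((x−xᵢ)/Δx)^{l₁} ((y−yⱼ)/Δy)^{l₂}. -/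
noncomputable def taylorPoly (m : ℕ) (xi yj dx dy : ℝ) (co : ℕ → ℕ → ℝ) : ℝ × ℝ → ℝ :=
  fun p => ∑ l₁ ∈ Finset.range (2 * m + 2), ∑ l₂ ∈ Finset.range (2 * m + 2),
    co l₁ l₂ * ((p.1 - xi) / dx) ^ l₁ * ((p.2 - yj) / dy) ^ l₂

namespace DCH

/-- Polynomial from coefficient array. -/
noncomputable def P (m : ℕ) (xi yj dx dy : ℝ) (d : ℕ → ℕ → ℝ) : ℝ × ℝ → ℝ :=
  fun p => ∑ l₁ ∈ Finset.range (2 * m + 2), ∑ l₂ ∈ Finset.range (2 * m + 2),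
    d l₁ l₂ * ((p.1 - xi) / dx) ^ l₁ * ((p.2 - yj) / dy) ^ l₂

/-- x-derivative operator on coefficients. -/
noncomputable def D1 (dx : ℝ) : (ℕ → ℕ → ℝ) →ₗ[ℝ] (ℕ → ℕ → ℝ) where
  toFun d := fun l₁ l₂ => ((l₁ : ℝ) + 1) / dx * d (l₁ + 1) l₂
  map_add' d e := by funext l₁ l₂; simp [mul_add]
  map_smul' r d := by funext l₁ l₂; simp [Pi.smul_apply, smul_eq_mul]; ring

/-- y-derivative operator on coefficients. -/
noncomputable def D2 (dy : ℝ) : (ℕ → ℕ → ℝ) →ₗ[ℝ] (ℕ → ℕ → ℝ) where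
  toFun d := fun l₁ l₂ => ((l₂ : ℝ) + 1) / dy * d l₁ (l₂ + 1)
  map_add' d e := by funext l₁ l₂; simp [mul_add]
  map_smul' r d := by funext l₁ l₂; simp [Pi.smul_apply, smul_eq_mul]; ring

/-- Support condition. -/
def Snice (m : ℕ) (d : ℕ → ℕ → ℝ) : Prop :=
  ∀ l₁ l₂, 2 * m + 2 ≤ l₁ ∨ 2 * m + 2 ≤ l₂ → d l₁ l₂ = 0

lemma S_D1 {m : ℕ} {dx : ℝ} {d : ℕ → ℕ → ℝ} (hd : Snice m d) : Snice m (D1 dx d) := by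
  intro l₁ l₂ h
  have : d (l₁ + 1) l₂ = 0 := hd _ _ (by omega)
  simp [D1, this]

lemma S_D2 {m : ℕ} {dy : ℝ} {d : ℕ → ℕ → ℝ} (hd : Snice m d) : Snice m (D2 dy d) := by
  intro l₁ l₂ h
  have : d l₁ (l₂ + 1) = 0 := hd _ _ (by omega)
  simp [D2, this]

lemma hasDerivAt_poly (n : ℕ) (g : ℕ → ℝ) (a c t : ℝ) :
    HasDerivAt (fun x => ∑ l ∈ Finset.range n, g l * ((x - a) / c) ^ l)
      (∑ l ∈ Finset.range n, g l * ((l : ℝ) * ((t - a) / c) ^ (l - 1) * (1 / c))) t := by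
  apply HasDerivAt.fun_sum
  intro l _
  have h : HasDerivAt (fun x : ℝ => (x - a) / c) (1 / c) t := by
    simpa using ((hasDerivAt_id t).sub_const a).div_const c
  exact (h.pow l).const_mul (g l)

lemma shift_sum (n : ℕ) (g : ℕ → ℝ) (c X : ℝ) (hg : g (n + 1) = 0) :
    ∑ l ∈ Finset.range (n + 1), g l * ((l : ℝ) * X ^ (l - 1) * (1 / c))
      = ∑ l ∈ Finset.range (n + 1), ((l : ℝ) + 1) / c * g (l + 1) * X ^ l := by
  rw [Finset.sum_range_succ' (fun l => g l * ((l : ℝ) * X ^ (l - 1) * (1 / c))),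
    Finset.sum_range_succ]
  simp only [hg, Nat.cast_zero, zero_mul, mul_zero, add_zero, zero_add]
  refine Finset.sum_congr rfl fun i _ => ?_
  have : (i + 1) - 1 = i := rfl
  rw [this]
  push_cast
  ring

lemma pd1_P (m : ℕ) (xi yj dx dy : ℝ) (d : ℕ → ℕ → ℝ) (hd : Snice m d) :
    pd1 (P m xi yj dx dy d) = P m xi yj dx dy (D1 dx d) := by
  funext p
  have h1 : (fun x => P m xi yj dx dy d (x, p.2))
      = fun x => ∑ l₁ ∈ Finset.range (2 * m + 2),
          (∑ l₂ ∈ Finset.range (2 * m + 2), d l₁ l₂ * ((p.2 - yj) / dy) ^ l₂)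
            * ((x - xi) / dx) ^ l₁ := by
    funext x
    simp only [P]
    refine Finset.sum_congr rfl fun l₁ _ => ?_
    rw [Finset.sum_mul]
    exact Finset.sum_congr rfl fun l₂ _ => by ring
  show deriv (fun x => P m xi yj dx dy d (x, p.2)) p.1 = _
  rw [h1, (hasDerivAt_poly (2 * m + 2)
      (fun l₁ => ∑ l₂ ∈ Finset.range (2 * m + 2), d l₁ l₂ * ((p.2 - yj) / dy) ^ l₂)
      xi dx p.1).deriv]
  rw [show 2 * m + 2 = (2 * m + 1) + 1 from rfl]
  rw [shift_sum (2 * m + 1)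
      (fun l₁ => ∑ l₂ ∈ Finset.range (2 * m + 1 + 1), d l₁ l₂ * ((p.2 - yj) / dy) ^ l₂)
      dx ((p.1 - xi) / dx)
      (by exact Finset.sum_eq_zero fun l₂ _ => by rw [hd _ _ (Or.inl (by omega))]; ring)]
  simp only [P]
  refine Finset.sum_congr rfl fun l₁ _ => ?_
  rw [Finset.mul_sum, Finset.sum_mul]
  refine Finset.sum_congr rfl fun l₂ _ => ?_
  simp only [D1, LinearMap.coe_mk, AddHom.coe_mk]
  ring

lemma pd2_P (m : ℕ) (xi yj dx dy : ℝ) (d : ℕ → ℕ → ℝ) (hd : Snice m d) :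
    pd2 (P m xi yj dx dy d) = P m xi yj dx dy (D2 dy d) := by
  funext p
  have h1 : (fun y => P m xi yj dx dy d (p.1, y))
      = fun y => ∑ l₂ ∈ Finset.range (2 * m + 2),
          (∑ l₁ ∈ Finset.range (2 * m + 2), d l₁ l₂ * ((p.1 - xi) / dx) ^ l₁)
            * ((y - yj) / dy) ^ l₂ := by
    funext y
    simp only [P]
    rw [Finset.sum_comm]
    refine Finset.sum_congr rfl fun l₂ _ => ?_
    rw [Finset.sum_mul]
  show deriv (fun y => P m xi yj dx dy d (p.1, y)) p.2 = _
  rw [h1, (hasDerivAt_poly (2 * m + 2)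
      (fun l₂ => ∑ l₁ ∈ Finset.range (2 * m + 2), d l₁ l₂ * ((p.1 - xi) / dx) ^ l₁)
      yj dy p.2).deriv]
  rw [show 2 * m + 2 = (2 * m + 1) + 1 from rfl]
  rw [shift_sum (2 * m + 1)
      (fun l₂ => ∑ l₁ ∈ Finset.range (2 * m + 1 + 1), d l₁ l₂ * ((p.1 - xi) / dx) ^ l₁)
      dy ((p.2 - yj) / dy)
      (by exact Finset.sum_eq_zero fun l₁ _ => by rw [hd _ _ (Or.inr (by omega))]; ring)]
  simp only [P]
  rw [Finset.sum_comm]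
  refine Finset.sum_congr rfl fun l₂ _ => ?_
  rw [Finset.mul_sum, Finset.sum_mul]
  refine Finset.sum_congr rfl fun l₁ _ => ?_
  simp only [D2, LinearMap.coe_mk, AddHom.coe_mk]
  ring

lemma P_add (m : ℕ) (xi yj dx dy : ℝ) (d e : ℕ → ℕ → ℝ) :
    P m xi yj dx dy (d + e) = P m xi yj dx dy d + P m xi yj dx dy e := by
  funext p
  simp only [P, Pi.add_apply, add_mul, Finset.sum_add_distrib]

lemma S_add {m : ℕ} {d e : ℕ → ℕ → ℝ} (hd : Snice m d) (he : Snice m e) :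
    Snice m (d + e) := by
  intro l₁ l₂ h
  simp [Pi.add_apply, hd _ _ h, he _ _ h]

noncomputable def L (dx dy : ℝ) : (ℕ → ℕ → ℝ) →ₗ[ℝ] (ℕ → ℕ → ℝ) :=
  D1 dx * D1 dx + D2 dy * D2 dy

lemma S_L {m : ℕ} {dx dy : ℝ} {d : ℕ → ℕ → ℝ} (hd : Snice m d) : Snice m (L dx dy d) := by
  have : L dx dy d = D1 dx (D1 dx d) + D2 dy (D2 dy d) := by
    simp [L, LinearMap.add_apply, Module.End.mul_apply]
  rw [this]
  exact S_add (S_D1 (S_D1 hd)) (S_D2 (S_D2 hd))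

lemma S_Lpow {m : ℕ} {dx dy : ℝ} {d : ℕ → ℕ → ℝ} (hd : Snice m d) (q : ℕ) :
    Snice m ((L dx dy ^ q) d) := by
  induction q with
  | zero => simpa using hd
  | succ n ih =>
    rw [pow_succ', Module.End.mul_apply]
    exact S_L ih

lemma lapl2_P (m : ℕ) (xi yj dx dy : ℝ) (d : ℕ → ℕ → ℝ) (hd : Snice m d) :
    lapl2 (P m xi yj dx dy d) = P m xi yj dx dy (L dx dy d) := by
  have h : L dx dy d = D1 dx (D1 dx d) + D2 dy (D2 dy d) := by
    simp [L, LinearMap.add_apply, Module.End.mul_apply]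
  funext p
  show pd1 (pd1 (P m xi yj dx dy d)) p + pd2 (pd2 (P m xi yj dx dy d)) p = _
  rw [pd1_P m xi yj dx dy d hd, pd1_P m xi yj dx dy _ (S_D1 hd),
    pd2_P m xi yj dx dy d hd, pd2_P m xi yj dx dy _ (S_D2 hd), h, P_add]
  rfl

lemma lapl2_iter_P (m : ℕ) (xi yj dx dy : ℝ) (d : ℕ → ℕ → ℝ) (hd : Snice m d) (q : ℕ) :
    lapl2^[q] (P m xi yj dx dy d) = P m xi yj dx dy ((L dx dy ^ q) d) := by
  induction q with
  | zero => simp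
  | succ n ih =>
    rw [Function.iterate_succ_apply', ih, lapl2_P m xi yj dx dy _ (S_Lpow hd n),
      pow_succ', Module.End.mul_apply]

lemma S_D1pow {m : ℕ} {dx : ℝ} {d : ℕ → ℕ → ℝ} (hd : Snice m d) (a : ℕ) :
    Snice m ((D1 dx ^ a) d) := by
  induction a with
  | zero => simpa using hd
  | succ n ih =>
    rw [pow_succ', Module.End.mul_apply]
    exact S_D1 ih

lemma pd1_iter_P (m : ℕ) (xi yj dx dy : ℝ) (d : ℕ → ℕ → ℝ) (hd : Snice m d) (a : ℕ) :
    pd1^[a] (P m xi yj dx dy d) = P m xi yj dx dy ((D1 dx ^ a) d) := by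
  induction a with
  | zero => simp
  | succ n ih =>
    rw [Function.iterate_succ_apply', ih, pd1_P m xi yj dx dy _ (S_D1pow hd n),
      pow_succ', Module.End.mul_apply]

lemma P_center (m : ℕ) (xi yj dx dy : ℝ) (d : ℕ → ℕ → ℝ) :
    P m xi yj dx dy d (xi, yj) = d 0 0 := by
  simp only [P, sub_self, zero_div]
  rw [Finset.sum_eq_single 0]
  · rw [Finset.sum_eq_single 0]
    · simp
    · intro b _ hb; simp [zero_pow hb]
    · intro h; exact absurd (Finset.mem_range.mpr (by omega)) h
  · intro b _ hb; simp [zero_pow hb]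
  · intro h; exact absurd (Finset.mem_range.mpr (by omega)) h

lemma D1_pow_apply {dx : ℝ} (hdx : dx ≠ 0) :
    ∀ (a : ℕ) (d : ℕ → ℕ → ℝ) (l₂ : ℕ),
      ((D1 dx ^ a) d) 0 l₂ = (a.factorial : ℝ) / dx ^ a * d a l₂ := by
  intro a
  induction a with
  | zero => intro d l₂; simp
  | succ n ih =>
    intro d l₂
    rw [pow_succ, Module.End.mul_apply, ih]
    simp only [D1, LinearMap.coe_mk, AddHom.coe_mk]
    rw [Nat.factorial_succ]
    push_cast
    field_simp
    ring

lemma D2_pow_apply {dy : ℝ} (hdy : dy ≠ 0) :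
    ∀ (b : ℕ) (d : ℕ → ℕ → ℝ) (l₁ : ℕ),
      ((D2 dy ^ b) d) l₁ 0 = (b.factorial : ℝ) / dy ^ b * d l₁ b := by
  intro b
  induction b with
  | zero => intro d l₁; simp
  | succ n ih =>
    intro d l₁
    rw [pow_succ, Module.End.mul_apply, ih]
    simp only [D2, LinearMap.coe_mk, AddHom.coe_mk]
    rw [Nat.factorial_succ]
    push_cast
    field_simp
    ring

/-- General first-index version. -/
lemma D1_pow_apply' {dx : ℝ} (hdx : dx ≠ 0) :
    ∀ (a : ℕ) (d : ℕ → ℕ → ℝ) (l₁ l₂ : ℕ),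
      ((D1 dx ^ a) d) l₁ l₂
        = ((l₁ + a).factorial / l₁.factorial : ℝ) / dx ^ a * d (l₁ + a) l₂ := by
  intro a
  induction a with
  | zero =>
    intro d l₁ l₂
    simp only [pow_zero, Module.End.one_apply, Nat.add_zero]
    rw [div_self (by exact_mod_cast l₁.factorial_ne_zero : (l₁.factorial : ℝ) ≠ 0)]
    simp
  | succ n ih =>
    intro d l₁ l₂
    rw [pow_succ, Module.End.mul_apply, ih]
    simp only [D1, LinearMap.coe_mk, AddHom.coe_mk]
    have h1 : l₁ + (n + 1) = (l₁ + n) + 1 := by omega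
    rw [h1, Nat.factorial_succ]
    have hf1 : ((l₁.factorial : ℝ)) ≠ 0 := Nat.cast_ne_zero.mpr l₁.factorial_ne_zero
    push_cast
    field_simp
    ring

lemma comm12 (dx dy : ℝ) : Commute (D1 dx) (D2 dy) := by
  apply LinearMap.ext
  intro d
  funext l₁ l₂
  simp only [Module.End.mul_apply, D1, D2, LinearMap.coe_mk, AddHom.coe_mk]
  ring

end DCH


theorem dirichlet_corner_hermite_cbc_formula
    (m : ℕ) (xi yj dx dy : ℝ) (hdx : dx ≠ 0) (hdy : dy ≠ 0) (co : ℕ → ℕ → ℝ)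
    (c : ℝ) :
    ∀ q α : ℕ, q ≤ m → α ≤ 2 * m + 1 →
      c ^ (2 * q) *
        (pd1^[α] (lapl2^[q] (taylorPoly m xi yj dx dy co))) (xi, yj)
      = c ^ (2 * q) *
          ∑ j ∈ (Finset.range (q + 1)).filter (fun j => 2 * (q - j) + α ≤ 2 * m + 1),
            (q.choose j : ℝ) *
              (((2 * (q - j) + α).factorial : ℝ) / dx ^ (2 * (q - j) + α)) *
              (((2 * j).factorial : ℝ) / dy ^ (2 * j)) *
              co (2 * (q - j) + α) (2 * j) := by
  intro q α hq hα
  congr 1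
  set c₀ : ℕ → ℕ → ℝ := fun l₁ l₂ => if l₁ < 2 * m + 2 ∧ l₂ < 2 * m + 2 then co l₁ l₂ else 0
    with hc₀
  have htp : taylorPoly m xi yj dx dy co = DCH.P m xi yj dx dy c₀ := by
    funext p
    simp only [taylorPoly, DCH.P]
    refine Finset.sum_congr rfl fun l₁ h1 => Finset.sum_congr rfl fun l₂ h2 => ?_
    rw [Finset.mem_range] at h1 h2
    simp [hc₀, h1, h2]
  have hS : DCH.Snice m c₀ := by
    intro l₁ l₂ h
    simp only [hc₀]
    rw [if_neg]
    omega
  rw [htp, DCH.lapl2_iter_P m xi yj dx dy c₀ hS q,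
    DCH.pd1_iter_P m xi yj dx dy _ (DCH.S_Lpow hS q) α, DCH.P_center]
  have hcomm : Commute ((DCH.D2 dy) ^ 2) ((DCH.D1 dx) ^ 2) :=
    ((DCH.comm12 dx dy).symm).pow_pow 2 2
  have hLrw : DCH.L dx dy = (DCH.D2 dy) ^ 2 + (DCH.D1 dx) ^ 2 := by
    rw [DCH.L, sq, sq, add_comm]
  rw [hLrw, Commute.add_pow hcomm]
  rw [LinearMap.sum_apply, map_sum, Finset.sum_apply, Finset.sum_apply, Finset.sum_filter]
  refine Finset.sum_congr rfl fun j hj => ?_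
  rw [Finset.mem_range] at hj
  rw [← pow_mul, ← pow_mul, Module.End.mul_apply, Module.End.mul_apply,
    Module.End.natCast_apply]
  have hsm : ∀ (T : (ℕ → ℕ → ℝ) →ₗ[ℝ] (ℕ → ℕ → ℝ)) (v : ℕ → ℕ → ℝ),
      T ((q.choose j) • v) = (q.choose j) • T v := fun T v => map_nsmul T _ _
  rw [hsm, hsm, hsm]
  have hev : (((q.choose j) • (DCH.D1 dx ^ α) ((DCH.D2 dy ^ (2 * j))
      ((DCH.D1 dx ^ (2 * (q - j))) c₀))) : ℕ → ℕ → ℝ) 0 0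
      = (q.choose j : ℝ) * ((DCH.D1 dx ^ α) ((DCH.D2 dy ^ (2 * j))
        ((DCH.D1 dx ^ (2 * (q - j))) c₀))) 0 0 := by
    simp [Pi.smul_apply]
  rw [hev, DCH.D1_pow_apply hdx, DCH.D2_pow_apply hdy, DCH.D1_pow_apply' hdx]
  have hidx : α + 2 * (q - j) = 2 * (q - j) + α := Nat.add_comm _ _
  rw [hidx]
  by_cases hcond : 2 * (q - j) + α ≤ 2 * m + 1
  · rw [if_pos hcond]
    have hc : c₀ (2 * (q - j) + α) (2 * j) = co (2 * (q - j) + α) (2 * j) := by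
      simp only [hc₀]
      rw [if_pos ⟨by omega, by omega⟩]
    rw [hc]
    have hfα : ((α.factorial : ℝ)) ≠ 0 := Nat.cast_ne_zero.mpr α.factorial_ne_zero
    have hdxp : dx ^ (2 * (q - j) + α) = dx ^ (2 * (q - j)) * dx ^ α := pow_add dx _ _
    rw [hdxp]
    field_simp
  · rw [if_neg hcond]
    have hc : c₀ (2 * (q - j) + α) (2 * j) = 0 := by
      simp only [hc₀]
      rw [if_neg]
      omega
    rw [hc]
    ring
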